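/- arXiv:1911.01342 — 3 statements merged into one kernel-verified Lean document; each statement's English description precedes it below -/
import Mathlib

section
/- The burning number of the path on n vertices equals the ceiling of the square root of n. -/
open SimpleGraph

/-- The set of vertices burned after `t` rounds of the burning process on `G`,
where `s i` is the source of fire chosen in round `i + 1`. -/
def burnSet {V : Type*} (G : SimpleGraph V) (s : ℕ → V) : ℕ → Set V
  | 0 => ∅
  | t + 1 => burnSet G s t ∪ {w | ∃ u ∈ burnSet G s t, G.Adj u w} ∪ {s t}

/-- The partial burning number `b(G, S)`: the least number of rounds needed to
burn every vertex of `S`. -/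
noncomputable def pburn {V : Type*} (G : SimpleGraph V) (S : Set V) : ℕ :=
  sInf {r | ∃ s : ℕ → V, S ⊆ burnSet G s r}

/-- The burning number `b(G)`. -/
noncomputable def burn {V : Type*} (G : SimpleGraph V) : ℕ :=
  pburn G Set.univ

/-- The ball of radius `t` around `v` in graph distance. -/
def gball {V : Type*} (G : SimpleGraph V) (v : V) (t : ℕ) : Set V :=
  {w | G.dist v w ≤ t}

/-- The `m × n` Cartesian grid `P_m □ P_n`; the first coordinate is the height (row). -/
def gridGraph (m n : ℕ) : SimpleGraph (Fin m × Fin n) :=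
  (pathGraph m) □ (pathGraph n)

/- ### auxiliary lemmas -/

lemma burnSet_mono {V : Type*} (G : SimpleGraph V) (s : ℕ → V) :
    Monotone (burnSet G s) := by
  apply monotone_nat_of_le_succ
  intro t x hx
  left; left; exact hx

lemma source_mem_burnSet {V : Type*} (G : SimpleGraph V) (s : ℕ → V) (t : ℕ) :
    s t ∈ burnSet G s (t + 1) := by
  right; rfl

lemma adj_burnSet {V : Type*} {G : SimpleGraph V} {s : ℕ → V} {u w : V} {t : ℕ}
    (hu : u ∈ burnSet G s t) (h : G.Adj u w) : w ∈ burnSet G s (t + 1) := by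
  left; right; exact ⟨u, hu, h⟩

lemma walk_burn {V : Type*} {G : SimpleGraph V} {s : ℕ → V} :
    ∀ {u v : V} (p : G.Walk u v) (t : ℕ), u ∈ burnSet G s t → v ∈ burnSet G s (t + p.length) := by
  intro u v p
  induction p with
  | nil => intro t h; simpa using h
  | @cons a b c h q ih =>
    intro t hu
    have := ih (t + 1) (adj_burnSet hu h)
    have heq : t + 1 + q.length = t + (SimpleGraph.Walk.cons h q).length := by
      simp; omega
    rwa [heq] at this

lemma pathGraph_exists_walk {n : ℕ} :
    ∀ (d : ℕ) (i j : Fin n), i.val + d = j.val →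
      ∃ p : (pathGraph n).Walk i j, p.length = d := by
  intro d
  induction d with
  | zero =>
    intro i j h
    have : i = j := Fin.ext (by omega)
    subst this
    exact ⟨SimpleGraph.Walk.nil, rfl⟩
  | succ d ih =>
    intro i j h
    have h1 : i.val + 1 < n := by omega
    set i' : Fin n := ⟨i.val + 1, h1⟩ with hi'
    have hadj : (pathGraph n).Adj i i' := pathGraph_adj.mpr (Or.inl rfl)
    obtain ⟨p, hp⟩ := ih i' j (by simp [hi']; omega)
    exact ⟨SimpleGraph.Walk.cons hadj p, by simp [hp]⟩

lemma pathGraph_walk_length_ge {n : ℕ} :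
    ∀ {i j : Fin n} (p : (pathGraph n).Walk i j), Nat.dist i.val j.val ≤ p.length := by
  intro i j p
  induction p with
  | nil => simp [Nat.dist]
  | @cons a b c h p ih =>
    have := pathGraph_adj.mp h
    simp only [SimpleGraph.Walk.length_cons]
    simp [Nat.dist] at *
    omega

lemma pathGraph_dist {n : ℕ} (i j : Fin n) :
    (pathGraph n).dist i j = Nat.dist i.val j.val := by
  apply le_antisymm
  · rcases le_total i.val j.val with h | h
    · obtain ⟨p, hp⟩ := pathGraph_exists_walk (j.val - i.val) i j (by omega)
      have := SimpleGraph.dist_le p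
      simp [Nat.dist]
      omega
    · obtain ⟨p, hp⟩ := pathGraph_exists_walk (i.val - j.val) j i (by omega)
      have := SimpleGraph.dist_le p
      rw [SimpleGraph.dist_comm]
      simp [Nat.dist]
      omega
  · obtain ⟨p, hp⟩ := (pathGraph_preconnected n i j).exists_walk_length_eq_dist
    rw [← hp]
    exact pathGraph_walk_length_ge p

lemma burnSet_subset_balls {n : ℕ} (s : ℕ → Fin n) :
    ∀ r, burnSet (pathGraph n) s r ⊆
      {w : Fin n | ∃ t < r, Nat.dist (s t).val w.val ≤ r - 1 - t} := by
  intro r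
  induction r with
  | zero => simp [burnSet]
  | succ r ih =>
    intro w hw
    rcases hw with (hw | hw) | hw
    · obtain ⟨t, ht, hd⟩ := ih hw
      exact ⟨t, by omega, by omega⟩
    · obtain ⟨u, hu, hadj⟩ := hw
      obtain ⟨t, ht, hd⟩ := ih hu
      have := pathGraph_adj.mp hadj
      refine ⟨t, by omega, ?_⟩
      simp [Nat.dist] at *
      omega
    · refine ⟨r, by omega, ?_⟩
      simp only [Set.mem_singleton_iff] at hw
      subst hw
      simp [Nat.dist]

lemma sum_odds (r : ℕ) : ∑ j ∈ Finset.range r, (2 * j + 1) = r ^ 2 := by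
  induction r with
  | zero => simp
  | succ r ih => rw [Finset.sum_range_succ, ih]; ring

lemma sqrt_key (n r : ℕ) : n ≤ r ^ 2 ↔ ⌈Real.sqrt n⌉₊ ≤ r := by
  rw [Nat.ceil_le]
  constructor
  · intro h
    have h' : (n : ℝ) ≤ (r : ℝ) ^ 2 := by exact_mod_cast h
    calc Real.sqrt n ≤ Real.sqrt ((r : ℝ) ^ 2) := Real.sqrt_le_sqrt h'
      _ = r := Real.sqrt_sq (by positivity)
  · intro h
    have h0 : (0 : ℝ) ≤ (n : ℝ) := by positivity
    have := Real.sq_sqrt h0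
    have : (n : ℝ) ≤ (r : ℝ) ^ 2 := by nlinarith [Real.sqrt_nonneg (n : ℝ)]
    exact_mod_cast this

/-- The burning number of the path on `n` vertices equals `⌈√n⌉`. -/
theorem burn_pathGraph (n : ℕ) (hn : 1 ≤ n) :
    burn (pathGraph n) = ⌈Real.sqrt n⌉₊ := by
  set k := ⌈Real.sqrt n⌉₊ with hkdef
  have hnk : n ≤ k ^ 2 := (sqrt_key n k).mpr le_rfl
  -- the scheduling sums
  set c : ℕ → ℕ := fun t => ∑ i ∈ Finset.range t, (2 * (k - 1 - i) + 1) with hc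
  have hck : c k = k ^ 2 := by
    rw [hc]
    simpa using (Finset.sum_range_reflect (fun j => 2 * j + 1) k).trans (sum_odds k)
  have hcsucc : ∀ t, c (t + 1) = c t + (2 * (k - 1 - t) + 1) :=
    fun t => Finset.sum_range_succ _ t
  have hcmono : Monotone c := by
    apply monotone_nat_of_le_succ
    intro t; rw [hcsucc]; omega
  -- upper bound: exhibit a burning schedule with k rounds
  have hmem : k ∈ {r | ∃ s : ℕ → Fin n, Set.univ ⊆ burnSet (pathGraph n) s r} := by
    set sched : ℕ → Fin n := fun t => ⟨min (c t + (k - 1 - t)) (n - 1), by omega⟩ with hsched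
    refine ⟨sched, ?_⟩
    intro j _
    -- find the interval containing j
    have hex : ∃ t, (j : ℕ) < c t := ⟨k, by rw [hck]; omega⟩
    set t₀ := Nat.find hex with ht₀
    have ht₀pos : 0 < t₀ := by
      rcases Nat.eq_zero_or_pos t₀ with h | h
      · exfalso
        have := Nat.find_spec hex
        rw [← ht₀, h] at this
        simp [hc] at this
      · exact h
    set t := t₀ - 1 with htdef
    have h2 : (j : ℕ) < c (t + 1) := by
      have := Nat.find_spec hex
      rw [← ht₀] at this
      have : t + 1 = t₀ := by omega
      rw [this]
      exact Nat.find_spec hex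
    have h1 : c t ≤ (j : ℕ) := by
      by_contra h
      exact absurd (Nat.find_min hex (m := t) (by omega)) (by push_neg; omega)
    have htk : t < k := by
      by_contra h
      push_neg at h
      have := hcmono h
      omega
    -- the source for round t burns j by time k
    set d := k - 1 - t with hd
    set st : Fin n := sched t with hst
    have hstval : st.val = min (c t + d) (n - 1) := by simp [hst, hsched, hd]
    have hdist : Nat.dist st.val j.val ≤ d := by
      have hj : (j : ℕ) ≤ n - 1 := by omega
      have h2' : (j : ℕ) < c t + (2 * d + 1) := by rw [hcsucc] at h2; omega
      simp only [hstval, Nat.dist]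
      omega
    obtain ⟨p, hp⟩ := (pathGraph_preconnected n st j).exists_walk_length_eq_dist
    have hplen : p.length ≤ d := by
      rw [hp, pathGraph_dist]; exact hdist
    have hb := walk_burn p (t + 1) (source_mem_burnSet (pathGraph n) sched t)
    refine burnSet_mono (pathGraph n) _ ?_ hb
    omega
  -- lower bound
  have hlow : ∀ r ∈ {r | ∃ s : ℕ → Fin n, Set.univ ⊆ burnSet (pathGraph n) s r}, k ≤ r := by
    rintro r ⟨s, hs⟩
    rw [hkdef, ← sqrt_key]
    -- count burned vertices
    have hsub : (Finset.univ : Finset (Fin n)) ⊆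
        (Finset.range r).biUnion
          (fun t => Finset.univ.filter (fun w : Fin n => Nat.dist (s t).val w.val ≤ r - 1 - t)) := by
      intro w _
      obtain ⟨t, ht, hd⟩ := burnSet_subset_balls s r (hs (Set.mem_univ w))
      simp only [Finset.mem_biUnion, Finset.mem_range, Finset.mem_filter, Finset.mem_univ,
        true_and]
      exact ⟨t, ht, hd⟩
    have hcard : ∀ t, (Finset.univ.filter
        (fun w : Fin n => Nat.dist (s t).val w.val ≤ r - 1 - t)).card ≤ 2 * (r - 1 - t) + 1 := by
      intro t
      set d := r - 1 - t
      set cen := (s t).val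
      have : (Finset.univ.filter (fun w : Fin n => Nat.dist cen w.val ≤ d)).card
          ≤ (Finset.Icc (cen - d) (cen + d)).card := by
        apply Finset.card_le_card_of_injOn (fun w => w.val)
        · intro w hw
          simp only [Finset.mem_coe, Finset.mem_filter] at hw
          simp only [Finset.mem_coe, Finset.mem_Icc]
          have := hw.2
          simp [Nat.dist] at this
          omega
        · intro a _ b _ h
          exact Fin.val_injective h
      rw [Nat.card_Icc] at this
      omega
    calc n = (Finset.univ : Finset (Fin n)).card := by simp
      _ ≤ ((Finset.range r).biUnion _).card := Finset.card_le_card hsub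
      _ ≤ ∑ t ∈ Finset.range r, (Finset.univ.filter
            (fun w : Fin n => Nat.dist (s t).val w.val ≤ r - 1 - t)).card :=
          Finset.card_biUnion_le
      _ ≤ ∑ t ∈ Finset.range r, (2 * (r - 1 - t) + 1) := Finset.sum_le_sum (fun t _ => hcard t)
      _ = r ^ 2 := by
          simpa using (Finset.sum_range_reflect (fun j => 2 * j + 1) r).trans (sum_odds r)
  exact le_antisymm (Nat.sInf_le hmem) (le_csInf ⟨k, hmem⟩ hlow)
end

section
/- Adding a pendant vertex does not change the partial burning number: if u is a new vertex attached to a vertex v of H by a single edge, then b(H, X) = b(H + u + uv, X) for any X ⊆ V(H). -/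
open SimpleGraph

/-- The graph `H + u + uv` obtained from `H` by adding a new pendant vertex `u`
(modeled as `none : Option V`) joined only to `v`. -/
def addPendant {V : Type*} (H : SimpleGraph V) (v : V) : SimpleGraph (Option V) :=
  SimpleGraph.fromRel (fun a b =>
    (∃ x y, a = some x ∧ b = some y ∧ H.Adj x y) ∨ (a = none ∧ b = some v))

private lemma addPendant_adj_some_some {V : Type*} (H : SimpleGraph V) (v : V) (x y : V) :
    (addPendant H v).Adj (some x) (some y) ↔ H.Adj x y := by
  constructor
  · rintro ⟨hne, h | h⟩
    · rcases h with ⟨a, b, ha, hb, hab⟩ | ⟨h1, _⟩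
      · cases ha; cases hb; exact hab
      · cases h1
    · rcases h with ⟨a, b, ha, hb, hab⟩ | ⟨h1, _⟩
      · cases ha; cases hb; exact hab.symm
      · cases h1
  · intro h
    exact ⟨by simp [h.ne], Or.inl (Or.inl ⟨x, y, rfl, rfl, h⟩)⟩

private lemma addPendant_adj_none {V : Type*} (H : SimpleGraph V) (v : V) (w : Option V) :
    (addPendant H v).Adj w none ↔ w = some v := by
  constructor
  · rintro ⟨hne, h | h⟩
    · rcases h with ⟨a, b, _, hb, _⟩ | ⟨_, hb⟩ <;> cases hb
    · rcases h with ⟨a, b, ha, _, _⟩ | ⟨_, hb⟩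
      · cases ha
      · exact hb
  · rintro rfl
    exact ⟨by simp, Or.inr (Or.inr ⟨rfl, rfl⟩)⟩

/-- Adding a pendant vertex does not change the partial burning number:
`b(H, X) = b(H + u + uv, X)`. -/
theorem pburn_addPendant {V : Type*} [Fintype V] (H : SimpleGraph V) (v : V) (X : Set V) :
    pburn (addPendant H v) (some '' X) = pburn H X := by
  unfold pburn
  congr 1
  ext r
  constructor
  · rintro ⟨s', hs'⟩
    set s : ℕ → V := fun i => (s' i).getD v with hsdef
    have key : ∀ t, ∀ a ∈ burnSet (addPendant H v) s' t, a.getD v ∈ burnSet H s t := by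
      intro t
      induction t with
      | zero => intro a ha; exact absurd ha (by simp [burnSet])
      | succ t ih =>
        rintro a ((ha | ⟨w, hw, hadj⟩) | ha)
        · exact Or.inl (Or.inl (ih a ha))
        · match w, a with
          | some y, some x =>
            rw [addPendant_adj_some_some] at hadj
            exact Or.inl (Or.inr ⟨y, ih _ hw, hadj⟩)
          | none, some x =>
            have : some x = some v := (addPendant_adj_none H v _).mp hadj.symm
            cases this
            exact Or.inl (Or.inl (ih none hw))
          | w, none =>
            have : w = some v := (addPendant_adj_none H v _).mp hadj
            subst this
            exact Or.inl (Or.inl (ih (some v) hw))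
        · refine Or.inr ?_
          simp only [Set.mem_singleton_iff] at ha ⊢
          rw [ha]
    refine ⟨s, fun x hx => ?_⟩
    have := key r (some x) (hs' ⟨x, hx, rfl⟩)
    exact this
  · rintro ⟨s, hs⟩
    refine ⟨fun i => some (s i), ?_⟩
    have key : ∀ t, ∀ x ∈ burnSet H s t,
        some x ∈ burnSet (addPendant H v) (fun i => some (s i)) t := by
      intro t
      induction t with
      | zero => intro x hx; exact absurd hx (by simp [burnSet])
      | succ t ih =>
        rintro x ((hx | ⟨y, hy, hadj⟩) | hx)
        · exact Or.inl (Or.inl (ih x hx))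
        · exact Or.inl (Or.inr ⟨some y, ih y hy,
            (addPendant_adj_some_some H v y x).mpr hadj⟩)
        · exact Or.inr (by simp only [Set.mem_singleton_iff] at hx ⊢; rw [hx])
    rintro _ ⟨x, hx, rfl⟩
    exact key r x (hs hx)
end

section
/- Let P^{(1)},…,P^{(k)} be full horizontal rows of the grid G = G_{m,n} at heights h_1 < … < h_k such that h_i − h_{i−2} ≥ 2t + 2 for all 2 ≤ i ≤ k (with indices where defined), and let 𝒫 be the union of their vertex sets. Then for t ≤ (n−1)/2, the maximum over all vertices v of G of |B(v,t) ∩ 𝒫| is achieved by some vertex of 𝒫; i.e., max over v ∈ V(G) of |B(v,t) ∩ 𝒫| equals max over v ∈ 𝒫 of |B(v,t) ∩ 𝒫|. -/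
open SimpleGraph

private lemma pathGraph_connected' {n : ℕ} (h : 0 < n) : (pathGraph n).Connected := by
  cases n with
  | zero => omega
  | succ n => exact pathGraph_connected n

private lemma pathGraph_walk_length {n : ℕ} {u v : Fin n} (w : (pathGraph n).Walk u v) :
    (((u : ℕ) : ℤ) - ((v : ℕ) : ℤ)).natAbs ≤ w.length := by
  induction w with
  | nil => simp
  | @cons a b c h p ih =>
    rw [SimpleGraph.Walk.length_cons]
    rw [pathGraph_adj] at h
    omega

private lemma pathGraph_dist_le {n : ℕ} : ∀ (d : ℕ) (u v : Fin n), (u : ℕ) + d = (v : ℕ) →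
    (pathGraph n).dist u v ≤ d
  | 0, u, v, h => by
    have : u = v := Fin.ext (by omega)
    subst this
    simp
  | d + 1, u, v, h => by
    have hn : 0 < n := u.pos
    have hlt : (u : ℕ) + 1 < n := by have := v.isLt; omega
    set u' : Fin n := ⟨(u : ℕ) + 1, hlt⟩ with hu'
    have hadj : (pathGraph n).Adj u u' := pathGraph_adj.mpr (Or.inl rfl)
    have h1 : (pathGraph n).dist u u' ≤ 1 := (SimpleGraph.dist_eq_one_iff_adj.mpr hadj).le
    have h2 : (pathGraph n).dist u' v ≤ d := pathGraph_dist_le d u' v (by simp [hu']; omega)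
    have h3 := (pathGraph_connected' hn).dist_triangle (u := u) (v := u') (w := v)
    omega

private lemma pathGraph_dist_s9 {n : ℕ} (u v : Fin n) :
    (pathGraph n).dist u v = (((u : ℕ) : ℤ) - ((v : ℕ) : ℤ)).natAbs := by
  have hn : 0 < n := u.pos
  apply le_antisymm
  · rcases le_total (u : ℕ) (v : ℕ) with h | h
    · have := pathGraph_dist_le ((v : ℕ) - (u : ℕ)) u v (by omega)
      omega
    · have := pathGraph_dist_le ((u : ℕ) - (v : ℕ)) v u (by omega)
      rw [SimpleGraph.dist_comm]
      omega
  · obtain ⟨w, hw⟩ := (pathGraph_connected' hn).exists_walk_length_eq_dist u v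
    rw [← hw]
    exact pathGraph_walk_length w

private lemma boxProd_walk_length {α β : Type*} {G : SimpleGraph α} {H : SimpleGraph β}
    (hG : G.Connected) (hH : H.Connected) {x y : α × β} (w : (G □ H).Walk x y) :
    G.dist x.1 y.1 + H.dist x.2 y.2 ≤ w.length := by
  induction w with
  | nil => simp
  | @cons a b c h p ih =>
    rw [SimpleGraph.Walk.length_cons]
    rw [boxProd_adj] at h
    rcases h with ⟨h1, h2⟩ | ⟨h1, h2⟩
    · have t1 := hG.dist_triangle (u := a.1) (v := b.1) (w := c.1)
      have t2 : G.dist a.1 b.1 = 1 := SimpleGraph.dist_eq_one_iff_adj.mpr h1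
      rw [h2]
      omega
    · have t1 := hH.dist_triangle (u := a.2) (v := b.2) (w := c.2)
      have t2 : H.dist a.2 b.2 = 1 := SimpleGraph.dist_eq_one_iff_adj.mpr h1
      rw [h2]
      omega

private lemma boxProd_dist {α β : Type*} {G : SimpleGraph α} {H : SimpleGraph β}
    (hG : G.Connected) (hH : H.Connected) (x y : α × β) :
    (G □ H).dist x y = G.dist x.1 y.1 + H.dist x.2 y.2 := by
  obtain ⟨x1, x2⟩ := x
  obtain ⟨y1, y2⟩ := y
  dsimp only
  apply le_antisymm
  · obtain ⟨p, hp⟩ := hG.exists_walk_length_eq_dist x1 y1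
    obtain ⟨q, hq⟩ := hH.exists_walk_length_eq_dist x2 y2
    have hle := SimpleGraph.dist_le ((p.boxProdLeft H x2).append (q.boxProdRight G y1))
    rw [SimpleGraph.Walk.length_append] at hle
    have e1 : (p.boxProdLeft H x2).length = p.length := SimpleGraph.Walk.length_map _ _
    have e2 : (q.boxProdRight G y1).length = q.length := SimpleGraph.Walk.length_map _ _
    simp only [SimpleGraph.Walk.boxProdLeft, SimpleGraph.Walk.boxProdRight,
      SimpleGraph.Walk.length_map] at hle e1 e2
    omega
  · obtain ⟨w, hw⟩ := ((hG.boxProd hH).exists_walk_length_eq_dist (x1, x2) (y1, y2))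
    rw [← hw]
    simpa using boxProd_walk_length hG hH w

/-- `nd a b = |a - b|` via truncated subtraction. -/
private def nd (a b : ℕ) : ℕ := (a - b) + (b - a)

private lemma grid_dist {m n : ℕ} (hm : 0 < m) (hn : 0 < n) (p q : Fin m × Fin n) :
    (gridGraph m n).dist p q = nd (p.1 : ℕ) (q.1 : ℕ) + nd (p.2 : ℕ) (q.2 : ℕ) := by
  show (pathGraph m □ pathGraph n).dist p q = _
  rw [boxProd_dist (pathGraph_connected' hm) (pathGraph_connected' hn), pathGraph_dist_s9,
    pathGraph_dist_s9]
  simp only [nd]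
  omega
private def rowCnt (n t d y : ℕ) : ℕ :=
  (Finset.univ.filter (fun b : Fin n => d + nd (b : ℕ) y ≤ t)).card

private lemma rowCnt_zero {n t d : ℕ} (y : ℕ) (h : t < d) : rowCnt n t d y = 0 := by
  rw [rowCnt, Finset.card_eq_zero, Finset.filter_eq_empty_iff]
  intro b _
  simp only [nd]
  omega

private lemma rowCnt_le (n t d y : ℕ) : rowCnt n t d y ≤ 2 * (t - d) + 1 := by
  classical
  rw [rowCnt]
  refine le_trans (Finset.card_le_card_of_injOn (t := Finset.Icc (y - (t - d)) (y + (t - d)))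
    (fun b : Fin n => (b : ℕ)) ?_ ?_) ?_
  · intro b hb
    rw [Finset.mem_coe, Finset.mem_filter] at hb
    simp only [nd] at hb
    dsimp only
    rw [Finset.mem_coe, Finset.mem_Icc]
    omega
  · intro b1 _ b2 _ he
    exact Fin.ext he
  · rw [Nat.card_Icc]
    omega

private lemma rowCnt_eq {n t d : ℕ} (hd : d ≤ t) (ht : 2 * t ≤ n - 1) (hn : 1 ≤ n) :
    rowCnt n t d t = 2 * (t - d) + 1 := by
  classical
  rw [rowCnt]
  have hc : (Finset.Icc (t - (t - d)) (t + (t - d))).card = 2 * (t - d) + 1 := by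
    rw [Nat.card_Icc]
    omega
  rw [← hc]
  refine Finset.card_bij (fun b _ => (b : ℕ)) ?_ ?_ ?_
  · intro b hb
    rw [Finset.mem_filter] at hb
    simp only [nd] at hb
    rw [Finset.mem_Icc]
    omega
  · intro b1 _ b2 _ he
    exact Fin.ext he
  · intro j hj
    rw [Finset.mem_Icc] at hj
    have hjn : j < n := by omega
    refine ⟨⟨j, hjn⟩, ?_, rfl⟩
    rw [Finset.mem_filter]
    simp only [Finset.mem_univ, true_and, nd]
    omega

private lemma count_eq {m n k t : ℕ} (hm : 0 < m) (hn : 0 < n)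
    (hgt : Fin k → Fin m) (hinj : Function.Injective hgt) (w : Fin m × Fin n) :
    (gball (gridGraph m n) w t ∩ {p : Fin m × Fin n | ∃ i : Fin k, p.1 = hgt i}).ncard
      = ∑ i : Fin k, rowCnt n t (nd (hgt i : ℕ) (w.1 : ℕ)) (w.2 : ℕ) := by
  classical
  have hset : gball (gridGraph m n) w t ∩ {p : Fin m × Fin n | ∃ i : Fin k, p.1 = hgt i}
      = ↑(Finset.univ.biUnion (fun i : Fin k =>
          (Finset.univ.filter
            (fun b : Fin n => nd (hgt i : ℕ) (w.1 : ℕ) + nd (b : ℕ) (w.2 : ℕ) ≤ t)).image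
            (fun b => (hgt i, b)))) := by
    ext p
    obtain ⟨a, b⟩ := p
    simp only [Set.mem_inter_iff, Set.mem_setOf_eq, gball, Finset.coe_biUnion,
      Finset.coe_image, Finset.coe_filter, Set.mem_iUnion, Set.mem_image, Set.mem_setOf_eq,
      Finset.mem_univ, Finset.mem_coe, true_and]
    constructor
    · rintro ⟨hd, i, rfl⟩
      refine ⟨i, trivial, b, ?_, rfl⟩
      rw [grid_dist hm hn] at hd
      dsimp only at hd
      simp only [nd] at hd ⊢
      omega
    · rintro ⟨i, -, b', hcond, heq⟩
      rw [Prod.mk.injEq] at heq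
      obtain ⟨h1, h2⟩ := heq
      subst h2
      subst h1
      refine ⟨?_, i, rfl⟩
      rw [grid_dist hm hn]
      dsimp only
      simp only [nd] at hcond ⊢
      omega
  rw [hset, Set.ncard_coe_finset]
  rw [Finset.card_biUnion]
  · refine Finset.sum_congr rfl fun i _ => ?_
    rw [Finset.card_image_of_injective]
    · rfl
    · intro b1 b2 he
      exact (Prod.ext_iff.mp he).2
  · intro i _ j _ hij
    simp only [Finset.disjoint_left, Finset.mem_image]
    rintro p ⟨b1, _, rfl⟩ ⟨b2, _, he⟩
    exact hij (hinj (Prod.ext_iff.mp he).1.symm)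

private lemma key {m n k t : ℕ} (hk : 1 ≤ k) (hn : 1 ≤ n) (ht : 2 * t ≤ n - 1)
    (hgt : Fin k → Fin m) (hmono : StrictMono hgt)
    (hgap : ∀ i j : Fin k, (i : ℕ) + 2 = (j : ℕ) →
      2 * t + 2 ≤ (hgt j : ℕ) - (hgt i : ℕ))
    (w : Fin m × Fin n) :
    ∃ v : Fin m × Fin n, (∃ i, v.1 = hgt i) ∧
      ∑ i : Fin k, rowCnt n t (nd (hgt i : ℕ) (w.1 : ℕ)) (w.2 : ℕ)
        ≤ ∑ i : Fin k, rowCnt n t (nd (hgt i : ℕ) (v.1 : ℕ)) (v.2 : ℕ) := by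
  classical
  have htn : t < n := by omega
  set col : Fin n := ⟨t, htn⟩ with hcol
  set Hit : Finset (Fin k) :=
    Finset.univ.filter (fun i => nd (hgt i : ℕ) (w.1 : ℕ) ≤ t) with hHitdef
  by_cases hne : Hit.Nonempty
  · set i₀ := Hit.min' hne with hi0
    have hD0 : nd (hgt i₀ : ℕ) (w.1 : ℕ) ≤ t :=
      (Finset.mem_filter.mp (Hit.min'_mem hne)).2
    refine ⟨(hgt i₀, col), ⟨i₀, rfl⟩, ?_⟩
    dsimp only
    -- the count at v for the row i₀ itself
    have hnd0 : nd (hgt i₀ : ℕ) (hgt i₀ : ℕ) = 0 := by simp [nd]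
    have hg0 : rowCnt n t (nd (hgt i₀ : ℕ) (hgt i₀ : ℕ)) (col : ℕ) = 2 * t + 1 := by
      rw [hnd0, show (col : ℕ) = t from rfl, rowCnt_eq (Nat.zero_le t) ht hn]
      omega
    -- the LHS is a sum over Hit
    have hL : ∑ i : Fin k, rowCnt n t (nd (hgt i : ℕ) (w.1 : ℕ)) (w.2 : ℕ)
        = ∑ i ∈ Hit, rowCnt n t (nd (hgt i : ℕ) (w.1 : ℕ)) (w.2 : ℕ) := by
      refine (Finset.sum_subset (Finset.subset_univ Hit) fun i _ hi => ?_).symm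
      refine rowCnt_zero _ ?_
      by_contra hcon
      exact hi (Finset.mem_filter.mpr ⟨Finset.mem_univ i, by omega⟩)
    -- every member of Hit has index i₀ or i₀ + 1
    have hHitle : ∀ i ∈ Hit, (i₀ : ℕ) ≤ (i : ℕ) ∧ (i : ℕ) ≤ (i₀ : ℕ) + 1 := by
      intro i hi
      have h1 : i₀ ≤ i := Hit.min'_le i hi
      have hDi : nd (hgt i : ℕ) (w.1 : ℕ) ≤ t := (Finset.mem_filter.mp hi).2
      refine ⟨h1, ?_⟩
      by_contra hcon
      push_neg at hcon
      have hjk : (i₀ : ℕ) + 2 < k := by have := i.isLt; omega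
      set j : Fin k := ⟨(i₀ : ℕ) + 2, hjk⟩ with hj
      have hg := hgap i₀ j rfl
      have hmon : (hgt j : ℕ) ≤ (hgt i : ℕ) := by
        have : j ≤ i := by rw [Fin.le_def]; simp [hj]; omega
        exact hmono.monotone this
      simp only [nd] at hD0 hDi
      omega
    by_cases hi1 : (i₀ : ℕ) + 1 < k
    · set i₁ : Fin k := ⟨(i₀ : ℕ) + 1, hi1⟩ with hi1def
      have hne01 : i₀ ≠ i₁ := by
        rw [Fin.ne_iff_vne]
        simp [hi1def]
      have hsub : Hit ⊆ {i₀, i₁} := by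
        intro i hi
        have := hHitle i hi
        simp only [Finset.mem_insert, Finset.mem_singleton, Fin.ext_iff, hi1def]
        omega
      have hL2 : ∑ i ∈ Hit, rowCnt n t (nd (hgt i : ℕ) (w.1 : ℕ)) (w.2 : ℕ)
          ≤ rowCnt n t (nd (hgt i₀ : ℕ) (w.1 : ℕ)) (w.2 : ℕ)
            + rowCnt n t (nd (hgt i₁ : ℕ) (w.1 : ℕ)) (w.2 : ℕ) := by
        refine le_trans (Finset.sum_le_sum_of_subset hsub) ?_
        rw [Finset.sum_pair hne01]
      have hR2 : rowCnt n t (nd (hgt i₀ : ℕ) (hgt i₀ : ℕ)) (col : ℕ)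
            + rowCnt n t (nd (hgt i₁ : ℕ) (hgt i₀ : ℕ)) (col : ℕ)
          ≤ ∑ i : Fin k, rowCnt n t (nd (hgt i : ℕ) (hgt i₀ : ℕ)) (col : ℕ) := by
        have := Finset.sum_le_sum_of_subset
          (Finset.subset_univ ({i₀, i₁} : Finset (Fin k)))
          (f := fun i => rowCnt n t (nd (hgt i : ℕ) (hgt i₀ : ℕ)) (col : ℕ))
        rwa [Finset.sum_pair hne01] at this
      have hlt01 : (hgt i₀ : ℕ) < (hgt i₁ : ℕ) := by
        have : i₀ < i₁ := by rw [Fin.lt_def]; simp [hi1def]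
        exact hmono this
      have hf0 := rowCnt_le n t (nd (hgt i₀ : ℕ) (w.1 : ℕ)) (w.2 : ℕ)
      have hf1 := rowCnt_le n t (nd (hgt i₁ : ℕ) (w.1 : ℕ)) (w.2 : ℕ)
      -- middle numeric inequality
      have hmid : rowCnt n t (nd (hgt i₀ : ℕ) (w.1 : ℕ)) (w.2 : ℕ)
            + rowCnt n t (nd (hgt i₁ : ℕ) (w.1 : ℕ)) (w.2 : ℕ)
          ≤ rowCnt n t (nd (hgt i₀ : ℕ) (hgt i₀ : ℕ)) (col : ℕ)
            + rowCnt n t (nd (hgt i₁ : ℕ) (hgt i₀ : ℕ)) (col : ℕ) := by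
        rw [hg0]
        by_cases hD1 : nd (hgt i₁ : ℕ) (w.1 : ℕ) ≤ t
        · by_cases hgd : nd (hgt i₁ : ℕ) (hgt i₀ : ℕ) ≤ t
          · have hg1 : rowCnt n t (nd (hgt i₁ : ℕ) (hgt i₀ : ℕ)) (col : ℕ)
                = 2 * (t - nd (hgt i₁ : ℕ) (hgt i₀ : ℕ)) + 1 := by
              rw [show (col : ℕ) = t from rfl, rowCnt_eq hgd ht hn]
            rw [hg1]
            simp only [nd] at hf0 hf1 hD0 hD1 hgd ⊢
            omega
          · simp only [nd] at hf0 hf1 hD0 hD1 hgd ⊢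
            omega
        · have hf1z : rowCnt n t (nd (hgt i₁ : ℕ) (w.1 : ℕ)) (w.2 : ℕ) = 0 :=
            rowCnt_zero _ (by omega)
          rw [hf1z]
          simp only [nd] at hf0 hD0 ⊢
          omega
      rw [hL]
      exact le_trans hL2 (le_trans hmid hR2)
    · -- Hit = {i₀}
      have hsub : Hit ⊆ {i₀} := by
        intro i hi
        have h2 := hHitle i hi
        have := i.isLt
        simp only [Finset.mem_singleton, Fin.ext_iff]
        omega
      have hL2 : ∑ i ∈ Hit, rowCnt n t (nd (hgt i : ℕ) (w.1 : ℕ)) (w.2 : ℕ)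
          ≤ rowCnt n t (nd (hgt i₀ : ℕ) (w.1 : ℕ)) (w.2 : ℕ) := by
        refine le_trans (Finset.sum_le_sum_of_subset hsub) ?_
        rw [Finset.sum_singleton]
      have hR1 : rowCnt n t (nd (hgt i₀ : ℕ) (hgt i₀ : ℕ)) (col : ℕ)
          ≤ ∑ i : Fin k, rowCnt n t (nd (hgt i : ℕ) (hgt i₀ : ℕ)) (col : ℕ) :=
        Finset.single_le_sum (f := fun i => rowCnt n t (nd (hgt i : ℕ) (hgt i₀ : ℕ)) (col : ℕ))
          (fun i _ => Nat.zero_le _) (Finset.mem_univ i₀)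
      have hf0 := rowCnt_le n t (nd (hgt i₀ : ℕ) (w.1 : ℕ)) (w.2 : ℕ)
      rw [hL]
      refine le_trans hL2 (le_trans ?_ hR1)
      rw [hg0]
      omega
  · -- no row is within distance t of w: the LHS is zero
    have hz : ∑ i : Fin k, rowCnt n t (nd (hgt i : ℕ) (w.1 : ℕ)) (w.2 : ℕ) = 0 := by
      refine Finset.sum_eq_zero fun i _ => ?_
      refine rowCnt_zero _ ?_
      by_contra hcon
      exact hne ⟨i, Finset.mem_filter.mpr ⟨Finset.mem_univ i, by omega⟩⟩
    refine ⟨(hgt ⟨0, hk⟩, col), ⟨⟨0, hk⟩, rfl⟩, ?_⟩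
    rw [hz]
    exact Nat.zero_le _

/-- If the rows at heights `h_1 < … < h_k` satisfy `h_i - h_{i-2} ≥ 2t + 2` and
`t ≤ (n-1)/2`, then the maximum of `|B(v,t) ∩ 𝒫|` over all vertices `v` of the grid
is attained at a vertex of `𝒫`. -/
theorem max_ball_inter_rows (m n k t : ℕ) (hk : 1 ≤ k) (hn : 1 ≤ n)
    (ht : 2 * t ≤ n - 1) (hgt : Fin k → Fin m) (hmono : StrictMono hgt)
    (hgap : ∀ i j : Fin k, (i : ℕ) + 2 = (j : ℕ) →
      2 * t + 2 ≤ (hgt j : ℕ) - (hgt i : ℕ)) :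
    ∃ v ∈ {p : Fin m × Fin n | ∃ i : Fin k, p.1 = hgt i},
      ∀ w : Fin m × Fin n,
        (gball (gridGraph m n) w t ∩ {p : Fin m × Fin n | ∃ i : Fin k, p.1 = hgt i}).ncard ≤
          (gball (gridGraph m n) v t ∩ {p : Fin m × Fin n | ∃ i : Fin k, p.1 = hgt i}).ncard := by
  classical
  have hm : 0 < m := (hgt ⟨0, hk⟩).pos
  have hn0 : 0 < n := hn
  have hinj := hmono.injective
  obtain ⟨w₀, -, hw₀⟩ := Finset.exists_max_image Finset.univ
    (fun w : Fin m × Fin n => ∑ i : Fin k, rowCnt n t (nd (hgt i : ℕ) (w.1 : ℕ)) (w.2 : ℕ))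
    ⟨(hgt ⟨0, hk⟩, ⟨0, hn0⟩), Finset.mem_univ _⟩
  obtain ⟨v, hv, hle⟩ := key hk hn ht hgt hmono hgap w₀
  refine ⟨v, hv, fun w => ?_⟩
  rw [count_eq hm hn0 hgt hinj, count_eq hm hn0 hgt hinj]
  exact le_trans (hw₀ w (Finset.mem_univ w)) hle
end
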